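/- Let F_1,…,F_K ∈ M_n(ℂ), γ_1,…,γ_K ≥ 0, c_1,…,c_K ∈ ℂ, and define the Lindblad dissipator L(ρ) = Σ_{α=1}^K γ_α (F_α ρ F_α† − (1/2)(F_α† F_α ρ + ρ F_α† F_α)). If φ ∈ ℂ^n satisfies F_α φ = c_α φ for all α, then for ρ = φφ† one has L(ρ) = −i [ (i/2) Σ_{α=1}^K γ_α (c̄_α F_α − c_α F_α†), ρ ]; that is, on such a pure state the dissipator acts as a commutator with the Hermitian matrix (i/2) Σ_α γ_α (c̄_α F_α − c_α F_α†). -/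

import Mathlib

open Matrix
open scoped ComplexConjugate

/-- The Lindblad dissipator with jump operators `F α` and rates `γ α`. -/
noncomputable def dissip {n K : ℕ} (γ : Fin K → ℝ) (F : Fin K → Matrix (Fin n) (Fin n) ℂ)
    (ρ : Matrix (Fin n) (Fin n) ℂ) : Matrix (Fin n) (Fin n) ℂ :=
  ∑ α, (γ α : ℂ) •
    (F α * ρ * (F α)ᴴ - (1 / 2 : ℂ) • ((F α)ᴴ * F α * ρ + ρ * ((F α)ᴴ * F α)))

/-- The rank-one outer product `φφ†` of a vector with itself. -/
noncomputable def outer {n : ℕ} (φ : Fin n → ℂ) : Matrix (Fin n) (Fin n) ℂ :=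
  fun i j => φ i * conj (φ j)

lemma outer_left {n K : ℕ} (F : Fin K → Matrix (Fin n) (Fin n) ℂ) (c : Fin K → ℂ)
    (φ : Fin n → ℂ) (hφ : ∀ α, (F α).mulVec φ = c α • φ) (α : Fin K) :
    F α * outer φ = c α • outer φ := by
  ext i j
  have h := congrFun (hφ α) i
  simp only [Matrix.mulVec, dotProduct, Pi.smul_apply, smul_eq_mul] at h
  simp only [Matrix.mul_apply, outer, Matrix.smul_apply, smul_eq_mul]
  calc ∑ k, F α i k * (φ k * conj (φ j)) = (∑ k, F α i k * φ k) * conj (φ j) := by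
        rw [Finset.sum_mul]; congr 1; ext k; ring
    _ = c α * (φ i * conj (φ j)) := by rw [h]; ring

lemma outer_right {n K : ℕ} (F : Fin K → Matrix (Fin n) (Fin n) ℂ) (c : Fin K → ℂ)
    (φ : Fin n → ℂ) (hφ : ∀ α, (F α).mulVec φ = c α • φ) (α : Fin K) :
    outer φ * (F α)ᴴ = conj (c α) • outer φ := by
  ext i j
  have h := congrFun (hφ α) j
  simp only [Matrix.mulVec, dotProduct, Pi.smul_apply, smul_eq_mul] at h
  simp only [Matrix.mul_apply, outer, Matrix.smul_apply, Matrix.conjTranspose_apply,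
    smul_eq_mul]
  calc ∑ k, φ i * conj (φ k) * conj (F α j k)
      = φ i * conj (∑ k, F α j k * φ k) := by
        rw [map_sum, Finset.mul_sum]; congr 1; ext k
        rw [RingHom.map_mul]; ring
    _ = conj (c α) * (φ i * conj (φ j)) := by rw [h, RingHom.map_mul]; ring

/-- If `φ` is a common eigenvector of all jump operators,
`F α φ = c α φ`, then on the pure state `ρ = φφ†` the dissipator acts as a commutator:
`L(ρ) = -i[(i/2) Σ_α γ_α (c̄_α F_α − c_α F_αᴴ), ρ]`. -/
theorem tDFS_dissipator_acts_as_commutator (n K : ℕ)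
    (F : Fin K → Matrix (Fin n) (Fin n) ℂ) (γ : Fin K → ℝ) (hγ : ∀ α, 0 ≤ γ α)
    (c : Fin K → ℂ) (φ : Fin n → ℂ)
    (hφ : ∀ α, (F α).mulVec φ = c α • φ) :
    dissip γ F (outer φ) =
      -(Complex.I) •
        (((Complex.I / 2) • ∑ α, (γ α : ℂ) • (conj (c α) • F α - c α • (F α)ᴴ))
            * outer φ -
          outer φ *
            ((Complex.I / 2) • ∑ α, (γ α : ℂ) • (conj (c α) • F α - c α • (F α)ᴴ))) := by
  have h1 := outer_left F c φ hφ
  have h2 := outer_right F c φ hφ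
  unfold dissip
  have hI : -Complex.I * (Complex.I / 2) = 1 / 2 := by
    field_simp
    simp [Complex.I_sq]
  simp only [Matrix.smul_mul, Matrix.mul_smul, Finset.sum_mul, Finset.mul_sum]
  rw [← smul_sub, ← Finset.sum_sub_distrib, smul_smul, hI, Finset.smul_sum]
  apply Finset.sum_congr rfl
  intro α _
  simp only [Matrix.sub_mul, Matrix.mul_sub, Matrix.smul_mul, Matrix.mul_smul, h1, h2]
  have e2 : (F α)ᴴ * F α * outer φ = c α • ((F α)ᴴ * outer φ) := by
    rw [Matrix.mul_assoc, h1 α, Matrix.mul_smul]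
  have e3 : outer φ * ((F α)ᴴ * F α) = conj (c α) • (outer φ * F α) := by
    rw [← Matrix.mul_assoc, h2 α, Matrix.smul_mul]
  rw [e2, e3]
  module
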